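/- Assume k has characteristic l. Let I : C_c^∞(X, k) → k be a k-linear functional that is γ-invariant, i.e., I(γ·f) = I(f) for all f. Then there exists a unique k-linear functional J : C_c^∞(X^γ, k) → k such that I(φ) = J(φ|_{X^γ}) for every γ-invariant function φ ∈ C_c^∞(X, k). -/

import Mathlib

open Function Set

/-- The space `C_c^∞(X, k)` of locally constant, compactly supported `k`-valued
functions on `X`, as a `k`-submodule of `X → k`. -/
def Ccinf (X : Type*) [TopologicalSpace X] (k : Type*) [Field k] :
    Submodule k (X → k) where
  carrier := {f | IsLocallyConstant f ∧ HasCompactSupport f}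
  add_mem' := fun hf hg => ⟨hf.1.comp₂ hg.1 (· + ·), hf.2.add hg.2⟩
  zero_mem' := ⟨IsLocallyConstant.const 0, by
    simp [HasCompactSupport, tsupport, Function.support_zero]⟩
  smul_mem' := fun c f hf =>
    ⟨hf.1.comp (c • ·), hf.2.mono (Function.support_const_smul_subset c f)⟩

variable {X : Type*} [TopologicalSpace X] {k : Type*} [Field k]

/-- The action of a homeomorphism `γ` on `C_c^∞(X, k)`, given by
`(γ · f)(x) = f (γ⁻¹ x)`, as a `k`-linear endomorphism. -/
def gammaT (γ : X ≃ₜ X) : Ccinf X k →ₗ[k] Ccinf X k where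
  toFun f := ⟨fun x => (f : X → k) (γ.symm x),
    f.2.1.comp_continuous γ.symm.continuous,
    f.2.2.comp_isClosedEmbedding γ.symm.isClosedEmbedding⟩
  map_add' f g := by ext x; rfl
  map_smul' c f := by ext x; rfl

/-- Restriction of functions in `C_c^∞(X, k)` to the (closed) fixed-point set
`X^γ = {x : X // γ x = x}`, as a `k`-linear map to `C_c^∞(X^γ, k)`. -/
def resL (γ : X ≃ₜ X) [T2Space X] :
    Ccinf X k →ₗ[k] Ccinf {x : X // γ x = x} k where
  toFun f := ⟨fun y => (f : X → k) y.1,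
    f.2.1.comp_continuous continuous_subtype_val,
    f.2.2.comp_isClosedEmbedding
      ((isClosed_eq γ.continuous continuous_id).isClosedEmbedding_subtypeVal)⟩
  map_add' f g := by ext x; rfl
  map_smul' c f := by ext x; rfl

/-- The norm operator `N = ∑_{i=0}^{l-1} γ^i` on `C_c^∞(X, k)`. -/
def normOp (γ : X ≃ₜ X) (l : ℕ) : Module.End k (Ccinf X k) :=
  ∑ i ∈ Finset.range l, gammaT γ ^ i


section Helpers

variable {X : Type*} [TopologicalSpace X] {k : Type*} [Field k]

/-- Compact clopen neighborhoods inside opens. -/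
lemma exists_compact_clopen_nhd [LocallyCompactSpace X] [T2Space X]
    [TotallyDisconnectedSpace X] {U : Set X} (hU : IsOpen U) {x : X} (hx : x ∈ U) :
    ∃ V : Set X, IsClopen V ∧ IsCompact V ∧ x ∈ V ∧ V ⊆ U := by
  obtain ⟨K, hK, hxK, hKU⟩ := exists_compact_subset hU hx
  obtain ⟨V, hV, hxV, hVK⟩ := loc_compact_Haus_tot_disc_of_zero_dim.mem_nhds_iff.1
    (isOpen_interior.mem_nhds hxK)
  exact ⟨V, hV, hK.of_isClosed_subset hV.1 (hVK.trans interior_subset),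
    hxV, (hVK.trans interior_subset).trans hKU⟩

lemma iterate_l_fixed {γ : X ≃ₜ X} {l : ℕ} (hγl : ∀ x, (⇑γ)^[l] x = x) (n : ℕ) (x : X) :
    (⇑γ)^[n * l] x = x := by
  induction n with
  | zero => simp
  | succ n ih => rw [Nat.succ_mul, Function.iterate_add_apply, hγl, ih]

lemma symm_iterate_eq {γ : X ≃ₜ X} {l : ℕ} (hγl : ∀ x, (⇑γ)^[l] x = x)
    {a b : ℕ} (hab : a + b = l) (x : X) : (⇑γ.symm)^[a] x = (⇑γ)^[b] x := by
  apply γ.injective.iterate a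
  rw [show (⇑γ)^[a] ((⇑γ.symm)^[a] x) = x from
    Function.LeftInverse.iterate γ.apply_symm_apply a x,
    ← Function.iterate_add_apply, hab, hγl]

/-- If `x` is not fixed, then no iterate `γ^[i]`, `0 < i < l`, fixes it (for prime `l`). -/
lemma iterate_ne_of_not_fixed {γ : X ≃ₜ X} {l : ℕ} (hl : l.Prime)
    (hγl : ∀ x, (⇑γ)^[l] x = x) {x : X} (hx : γ x ≠ x) {i : ℕ}
    (h0 : 0 < i) (hi : i < l) : (⇑γ)^[i] x ≠ x := by
  intro hfix
  have hcop : Nat.Coprime i l :=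
    ((Nat.Prime.coprime_iff_not_dvd hl).mpr (Nat.not_dvd_of_pos_of_lt h0 hi)).symm
  obtain ⟨m, -, hm⟩ := Nat.exists_mul_mod_eq_one_of_coprime hcop hl.one_lt
  have him : i * m = 1 + (i * m / l) * l := by
    have h := Nat.div_add_mod (i * m) l
    rw [hm, Nat.mul_comm] at h
    rw [Nat.add_comm]
    exact h.symm
  have h1 : (⇑γ)^[i * m] x = x := by
    rw [Function.iterate_mul]
    exact Function.iterate_fixed hfix m
  rw [him, Function.iterate_add_apply, iterate_l_fixed hγl] at h1
  exact hx h1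

end Helpers

section Invariance

variable {X : Type*} [TopologicalSpace X] {k : Type*} [Field k]

lemma gammaT_pow_apply (γ : X ≃ₜ X) (f : Ccinf X k) (i : ℕ) (x : X) :
    (((gammaT γ ^ i) f : Ccinf X k) : X → k) x = (f : X → k) ((⇑γ.symm)^[i] x) := by
  induction i generalizing f x with
  | zero => simp
  | succ i ih =>
    rw [pow_succ', Module.End.mul_apply, Function.iterate_succ_apply]
    exact ih f (γ.symm x)

lemma inv_symm_apply {γ : X ≃ₜ X} {φ : Ccinf X k} (hφ : gammaT γ φ = φ) (x : X) :
    (φ : X → k) (γ.symm x) = (φ : X → k) x :=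
  congrFun (congrArg Subtype.val hφ) x

lemma gammaT_inv_apply {γ : X ≃ₜ X} {φ : Ccinf X k} (hφ : gammaT γ φ = φ) (x : X) :
    (φ : X → k) (γ x) = (φ : X → k) x := by
  have := inv_symm_apply hφ (γ x)
  rw [γ.symm_apply_apply] at this
  exact this.symm

lemma inv_iterate {γ : X ≃ₜ X} {φ : Ccinf X k} (hφ : gammaT γ φ = φ) (i : ℕ) (x : X) :
    (φ : X → k) ((⇑γ)^[i] x) = (φ : X → k) x := by
  induction i with
  | zero => rfl
  | succ i ih => rw [Function.iterate_succ_apply', gammaT_inv_apply hφ, ih]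

lemma inv_symm_iterate {γ : X ≃ₜ X} {φ : Ccinf X k} (hφ : gammaT γ φ = φ) (i : ℕ) (x : X) :
    (φ : X → k) ((⇑γ.symm)^[i] x) = (φ : X → k) x := by
  induction i with
  | zero => rfl
  | succ i ih => rw [Function.iterate_succ_apply', inv_symm_apply hφ, ih]

end Invariance

section FundDomain

variable {X : Type*} [TopologicalSpace X]

/-- Fundamental domain for the action on a list of "small" clopen sets. -/
lemma fund_domain (γ : X ≃ₜ X) (l : ℕ) (hl : 0 < l) (hγl : ∀ x, (⇑γ)^[l] x = x)
    (L : List (Set X))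
    (hL : ∀ W ∈ L, IsClopen W ∧ ∀ i, 0 < i → i < l → ∀ y ∈ W, (⇑γ)^[i] y ∉ W) :
    ∃ E : Set X, IsClopen E ∧
      (∀ x, x ∈ ⋃ W ∈ L, W → ∃ i, i < l ∧ (⇑γ)^[i] x ∈ E) ∧
      (∀ x ∈ E, ∀ i, 0 < i → i < l → (⇑γ)^[i] x ∉ E) := by
  induction L with
  | nil =>
    exact ⟨∅, isClopen_empty, fun x hx => by simp at hx, fun x hx => absurd hx (notMem_empty x)⟩
  | cons W L ih =>
    obtain ⟨E, hEclopen, hEcover, hEdisj⟩ := ih (fun W' hW' => hL W' (List.mem_cons_of_mem _ hW'))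
    obtain ⟨hWclopen, hWdisj⟩ := hL W (List.mem_cons_self)
    -- orbit of E
    set orb : Set X := ⋃ i ∈ Finset.range l, (⇑γ)^[i] ⁻¹' E with horb
    have horb_mem : ∀ z : X, z ∈ orb ↔ ∃ i, i < l ∧ (⇑γ)^[i] z ∈ E := by
      intro z
      simp only [horb, Set.mem_iUnion, Finset.mem_range, exists_prop, Set.mem_preimage]
    have horb_clopen : IsClopen orb := by
      apply Set.Finite.isClopen_biUnion (Finset.range l).finite_toSet
      exact fun i _ => hEclopen.preimage (γ.continuous.iterate i)
    refine ⟨E ∪ (W \ orb), hEclopen.union (hWclopen.diff horb_clopen), ?_, ?_⟩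
    · intro x hx
      simp only [List.mem_cons, Set.mem_iUnion] at hx
      obtain ⟨W', ⟨hW', hxW'⟩⟩ := hx
      rcases hW' with rfl | hW'
      · by_cases hxo : x ∈ orb
        · obtain ⟨i, hi, hie⟩ := (horb_mem x).1 hxo
          exact ⟨i, hi, Or.inl hie⟩
        · exact ⟨0, hl, Or.inr ⟨hxW', hxo⟩⟩
      · obtain ⟨i, hi, hie⟩ := hEcover x (Set.mem_biUnion hW' hxW')
        exact ⟨i, hi, Or.inl hie⟩
    · rintro x (hxE | ⟨hxW, hxo⟩) i h0 hi (hgE | ⟨hgW, hgo⟩)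
      · exact hEdisj x hxE i h0 hi hgE
      · exact hgo ((horb_mem _).2 ⟨l - i, by omega, by
          rw [← Function.iterate_add_apply]
          rw [show l - i + i = l by omega, hγl]
          exact hxE⟩)
      · exact hxo ((horb_mem x).2 ⟨i, hi, hgE⟩)
      · exact hWdisj i h0 hi x hxW hgW

end FundDomain

section Vanishing

variable {X : Type*} [TopologicalSpace X] {k : Type*} [Field k]

lemma I_vanishes [LocallyCompactSpace X] [T2Space X] [TotallyDisconnectedSpace X]
    (l : ℕ) (hl : l.Prime) (γ : X ≃ₜ X) (hγl : ∀ x, (⇑γ)^[l] x = x)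
    [CharP k l]
    (I : Ccinf X k →ₗ[k] k) (hI : ∀ f : Ccinf X k, I (gammaT γ f) = I f)
    (φ : Ccinf X k) (hφ : gammaT γ φ = φ)
    (hres : ∀ z : X, γ z = z → (φ : X → k) z = 0) : I φ = 0 := by
  classical
  have hlc : IsLocallyConstant (φ : X → k) := φ.2.1
  have hcs : HasCompactSupport (φ : X → k) := φ.2.2
  set K : Set X := tsupport (φ : X → k) with hKdef
  have hK : IsCompact K := hcs
  have hKsupp : K = Function.support (φ : X → k) := by
    apply closure_eq_iff_isClosed.2
    have : Function.support (φ : X → k) = ((φ : X → k) ⁻¹' {0})ᶜ := by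
      ext z; simp [Function.mem_support]
    rw [this]
    exact (hlc {0}).isClosed_compl
  -- choose small clopen neighborhoods around points of K
  have hC : ∀ x, x ∈ K → ∃ V : Set X,
      (IsClopen V ∧ ∀ i, 0 < i → i < l → ∀ y ∈ V, (⇑γ)^[i] y ∉ V) ∧ V ∈ nhds x := by
    intro x hx
    have hxfix : γ x ≠ x := by
      intro hfix
      have : (φ : X → k) x ≠ 0 := by rwa [hKsupp, Function.mem_support] at hx
      exact this (hres x hfix)
    have hsep : ∀ i : ℕ, ∃ A B : Set X,
        IsOpen A ∧ IsOpen B ∧ x ∈ A ∧ Disjoint A B ∧ (0 < i → i < l → (⇑γ)^[i] x ∈ B) := by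
      intro i
      by_cases h : 0 < i ∧ i < l
      · obtain ⟨A, B, hA, hB, hxA, hxB, hAB⟩ :=
          t2_separation (iterate_ne_of_not_fixed hl hγl hxfix h.1 h.2).symm
        exact ⟨A, B, hA, hB, hxA, hAB, fun _ _ => hxB⟩
      · exact ⟨Set.univ, ∅, isOpen_univ, isOpen_empty, Set.mem_univ x,
          Set.disjoint_empty _, fun h1 h2 => absurd ⟨h1, h2⟩ h⟩
    choose A B hA hB hxA hAB hxB using hsep
    set U : Set X := ⋂ i ∈ Finset.Ico 1 l, (A i ∩ (⇑γ)^[i] ⁻¹' B i) with hU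
    have hUopen : IsOpen U := isOpen_biInter_finset fun i _ =>
      (hA i).inter ((hB i).preimage (γ.continuous.iterate i))
    have hxU : x ∈ U := by
      rw [hU]
      refine Set.mem_iInter₂.2 fun i hi => ?_
      rw [Finset.mem_Ico] at hi
      exact ⟨hxA i, hxB i hi.1 hi.2⟩
    obtain ⟨V, hVclopen, _, hxV, hVU⟩ := exists_compact_clopen_nhd hUopen hxU
    refine ⟨V, ⟨hVclopen, ?_⟩, hVclopen.2.mem_nhds hxV⟩
    intro i h0 hi y hyV hgyV
    have hyU := hVU hyV
    have hgyU := hVU hgyV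
    rw [hU] at hyU hgyU
    have h1 := Set.mem_iInter₂.1 hyU i (Finset.mem_Ico.2 ⟨h0, hi⟩)
    have h2 := Set.mem_iInter₂.1 hgyU i (Finset.mem_Ico.2 ⟨h0, hi⟩)
    exact (hAB i).ne_of_mem h2.1 h1.2 rfl
  choose Vf hVf hVnh using hC
  obtain ⟨t, ht⟩ := hK.elim_nhds_subcover' Vf hVnh
  set L : List (Set X) := t.toList.map (fun p => Vf p.1 p.2) with hLdef
  have hLmem : ∀ W ∈ L, IsClopen W ∧ ∀ i, 0 < i → i < l → ∀ y ∈ W, (⇑γ)^[i] y ∉ W := by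
    intro W hW
    rw [hLdef, List.mem_map] at hW
    obtain ⟨a, _, rfl⟩ := hW
    exact hVf a.1 a.2
  have hKcov : ∀ x ∈ K, x ∈ ⋃ W ∈ L, W := by
    intro x hx
    have := ht hx
    rw [Set.mem_iUnion₂] at this
    obtain ⟨a, ha, hxa⟩ := this
    refine Set.mem_iUnion₂.2 ⟨Vf a.1 a.2, ?_, hxa⟩
    rw [hLdef]
    exact List.mem_map.2 ⟨a, Finset.mem_toList.2 ha, rfl⟩
  obtain ⟨E, hEclopen, hEcov, hEdisj⟩ := fund_domain γ l hl.pos hγl L hLmem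
  -- the function ψ = φ · χ_E
  set ψfun : X → k := fun x => if x ∈ E then (φ : X → k) x else 0 with hψdef
  have hψsupp : Function.support ψfun ⊆ Function.support (φ : X → k) := by
    intro x hx
    rw [Function.mem_support] at hx ⊢
    intro h0
    apply hx
    rw [hψdef]
    by_cases hxE : x ∈ E <;> simp [hxE, h0]
  have hψlc : IsLocallyConstant ψfun := by
    intro s
    by_cases h0 : (0 : k) ∈ s
    · have : ψfun ⁻¹' s = (E ∩ (φ : X → k) ⁻¹' s) ∪ Eᶜ := by
        ext z
        by_cases hz : z ∈ E <;> simp [hψdef, hz, h0]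
      rw [this]
      exact ((hEclopen.2.inter (hlc s)).union hEclopen.compl.2)
    · have : ψfun ⁻¹' s = E ∩ (φ : X → k) ⁻¹' s := by
        ext z
        by_cases hz : z ∈ E <;> simp [hψdef, hz, h0]
      rw [this]
      exact hEclopen.2.inter (hlc s)
  set ψ : Ccinf X k := ⟨ψfun, hψlc, hcs.mono hψsupp⟩ with hψ
  -- the norm of ψ is φ
  have hNψ : (∑ i ∈ Finset.range l, (gammaT γ ^ i)) ψ = φ := by
    apply Subtype.ext
    funext x
    rw [LinearMap.sum_apply]
    have hcoe : ((↑(∑ i ∈ Finset.range l, (gammaT γ ^ i) ψ) : X → k)) x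
        = ∑ i ∈ Finset.range l, ((((gammaT γ ^ i) ψ : Ccinf X k) : X → k) x) := by
      rw [AddSubmonoidClass.coe_finset_sum]
      exact Finset.sum_apply x _ _
    rw [hcoe]
    have hterm : ∀ i, (((gammaT γ ^ i) ψ : Ccinf X k) : X → k) x
        = if (⇑γ.symm)^[i] x ∈ E then (φ : X → k) x else 0 := by
      intro i
      rw [gammaT_pow_apply]
      show (if (⇑γ.symm)^[i] x ∈ E then (φ : X → k) ((⇑γ.symm)^[i] x) else 0) = _
      rw [inv_symm_iterate hφ]
    rw [Finset.sum_congr rfl (fun i _ => hterm i)]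
    by_cases hx0 : (φ : X → k) x = 0
    · simp [hx0]
    · have hxK : x ∈ K := by
        rw [hKsupp]; exact hx0
      obtain ⟨j, hj, hjE⟩ := hEcov x (hKcov x hxK)
      -- the unique index i₀ with γ.symm^[i₀] x ∈ E
      set i₀ : ℕ := if j = 0 then 0 else l - j with hi₀def
      have hi₀l : i₀ < l := by
        rw [hi₀def]; split <;> omega
      have hi₀E : (⇑γ.symm)^[i₀] x ∈ E := by
        rcases Nat.eq_zero_or_pos j with hj0 | hj0
        · subst hj0
          simp only [hi₀def, if_pos rfl]
          exact hjE
        · rw [hi₀def, if_neg (by omega), symm_iterate_eq hγl (by omega : l - j + j = l)]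
          exact hjE
      have hmono : ∀ a b : ℕ, a < b → b < l →
          (⇑γ.symm)^[a] x ∈ E → (⇑γ.symm)^[b] x ∈ E → False := by
        intro a b hab hbl haE hbE
        have hba : (⇑γ)^[b - a] ((⇑γ.symm)^[b] x) = (⇑γ.symm)^[a] x := by
          have hb : (⇑γ.symm)^[b] x = (⇑γ.symm)^[b - a] ((⇑γ.symm)^[a] x) := by
            rw [← Function.iterate_add_apply]
            congr 1
            omega
          rw [hb]
          exact Function.LeftInverse.iterate γ.apply_symm_apply (b - a) _
        exact hEdisj _ hbE (b - a) (by omega) (by omega) (hba ▸ haE)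
      rw [Finset.sum_eq_single_of_mem i₀ (Finset.mem_range.2 hi₀l)]
      · rw [if_pos hi₀E]
      · intro j' hj' hne
        rw [Finset.mem_range] at hj'
        rw [if_neg]
        intro hj'E
        rcases hne.lt_or_gt with h | h
        · exact hmono j' i₀ h hi₀l hj'E hi₀E
        · exact hmono i₀ j' h hj' hi₀E hj'E
  -- conclude
  have hIpow : ∀ i : ℕ, I ((gammaT γ ^ i) ψ) = I ψ := by
    intro i
    induction i with
    | zero => simp
    | succ i ih =>
      rw [pow_succ', Module.End.mul_apply, hI, ih]
  calc I φ = I ((∑ i ∈ Finset.range l, (gammaT γ ^ i)) ψ) := by rw [hNψ]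
    _ = ∑ i ∈ Finset.range l, I ((gammaT γ ^ i) ψ) := by
        rw [LinearMap.sum_apply, map_sum]
    _ = ∑ _i ∈ Finset.range l, I ψ := Finset.sum_congr rfl fun i _ => hIpow i
    _ = (l : k) * I ψ := by rw [Finset.sum_const, Finset.card_range, nsmul_eq_mul]
    _ = 0 := by rw [CharP.cast_eq_zero k l, zero_mul]

end Vanishing

section Extension

variable {X : Type*} [TopologicalSpace X] {k : Type*} [Field k]

open Classical in
/-- Builds a function from a list of (clopen set, value) pairs, with earlier
entries taking priority. -/
noncomputable def buildFun : List (Set X × k) → X → k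
  | [] => fun _ => 0
  | p :: L => fun x => if x ∈ p.1 then p.2 else buildFun L x

lemma buildFun_lc (L : List (Set X × k)) (h : ∀ p ∈ L, IsClopen p.1) :
    IsLocallyConstant (buildFun L) := by
  classical
  induction L with
  | nil => exact IsLocallyConstant.const 0
  | cons p L ih =>
    have hp := h p (List.mem_cons_self)
    have ihL := ih fun q hq => h q (List.mem_cons_of_mem _ hq)
    intro s
    by_cases hc : p.2 ∈ s
    · have : buildFun (p :: L) ⁻¹' s = p.1 ∪ (p.1ᶜ ∩ buildFun L ⁻¹' s) := by
        ext z
        by_cases hz : z ∈ p.1 <;> simp [buildFun, hz, hc]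
      rw [this]
      exact hp.2.union (hp.compl.2.inter (ihL s))
    · have : buildFun (p :: L) ⁻¹' s = p.1ᶜ ∩ buildFun L ⁻¹' s := by
        ext z
        by_cases hz : z ∈ p.1 <;> simp [buildFun, hz, hc]
      rw [this]
      exact hp.compl.2.inter (ihL s)

lemma buildFun_support (L : List (Set X × k)) :
    Function.support (buildFun L) ⊆ ⋃ p ∈ L, p.1 := by
  classical
  induction L with
  | nil => intro z hz; simp [buildFun] at hz
  | cons p L ih =>
    intro z hz
    rw [Function.mem_support] at hz
    by_cases hzp : z ∈ p.1
    · exact Set.mem_iUnion₂.2 ⟨p, List.mem_cons_self, hzp⟩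
    · have : buildFun L z ≠ 0 := by
        intro h0; apply hz; simp [buildFun, hzp, h0]
      obtain ⟨q, hq, hzq⟩ := Set.mem_iUnion₂.1 (ih this)
      exact Set.mem_iUnion₂.2 ⟨q, List.mem_cons_of_mem _ hq, hzq⟩

lemma buildFun_inv (γ : X ≃ₜ X) (L : List (Set X × k))
    (h : ∀ p ∈ L, ⇑γ ⁻¹' p.1 = p.1) (x : X) :
    buildFun L (γ.symm x) = buildFun L x := by
  classical
  induction L with
  | nil => rfl
  | cons p L ih =>
    have hp := h p (List.mem_cons_self)
    have ihL := ih fun q hq => h q (List.mem_cons_of_mem _ hq)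
    have hmem : γ.symm x ∈ p.1 ↔ x ∈ p.1 := by
      constructor
      · intro hx
        have : γ.symm x ∈ ⇑γ ⁻¹' p.1 := by rw [hp]; exact hx
        rwa [Set.mem_preimage, γ.apply_symm_apply] at this
      · intro hx
        have : γ.symm x ∈ ⇑γ ⁻¹' p.1 := by
          rw [Set.mem_preimage, γ.apply_symm_apply]; exact hx
        rwa [hp] at this
    by_cases hx : x ∈ p.1 <;> simp [buildFun, hx, hmem.2, hmem, ihL]

lemma buildFun_eq_on (L : List (Set X × k)) (S : Set X) (G : X → k)
    (h : ∀ p ∈ L, ∀ w ∈ p.1, w ∈ S → G w = p.2) :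
    ∀ z ∈ S, z ∈ (⋃ p ∈ L, p.1) → buildFun L z = G z := by
  classical
  induction L with
  | nil => intro z _ hz; simp at hz
  | cons p L ih =>
    intro z hzS hz
    by_cases hzp : z ∈ p.1
    · simp only [buildFun, if_pos hzp]
      exact (h p (List.mem_cons_self) z hzp hzS).symm
    · have hz' : z ∈ ⋃ q ∈ L, q.1 := by
        obtain ⟨q, hq, hzq⟩ := Set.mem_iUnion₂.1 hz
        rcases List.mem_cons.1 hq with rfl | hq
        · exact absurd hzq hzp
        · exact Set.mem_iUnion₂.2 ⟨q, hq, hzq⟩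
      simp only [buildFun, if_neg hzp]
      exact ih (fun q hq => h q (List.mem_cons_of_mem _ hq)) z hzS hz'

lemma list_biUnion_isCompact (L : List (Set X × k)) (h : ∀ p ∈ L, IsCompact p.1) :
    IsCompact (⋃ p ∈ L, p.1) := by
  induction L with
  | nil => simp
  | cons p L ih =>
    have : (⋃ q ∈ p :: L, q.1) = p.1 ∪ ⋃ q ∈ L, q.1 := by
      ext z
      simp only [Set.mem_iUnion, List.mem_cons, Set.mem_union]
      constructor
      · rintro ⟨q, (rfl | hq), hz⟩
        exacts [Or.inl hz, Or.inr ⟨q, hq, hz⟩]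
      · rintro (hz | ⟨q, hq, hz⟩)
        exacts [⟨p, Or.inl rfl, hz⟩, ⟨q, Or.inr hq, hz⟩]
    rw [this]
    exact (h p (List.mem_cons_self)).union
      (ih fun q hq => h q (List.mem_cons_of_mem _ hq))

lemma list_biUnion_isClosed (L : List (Set X × k)) (h : ∀ p ∈ L, IsClosed p.1) :
    IsClosed (⋃ p ∈ L, p.1) := by
  induction L with
  | nil => simp
  | cons p L ih =>
    have : (⋃ q ∈ p :: L, q.1) = p.1 ∪ ⋃ q ∈ L, q.1 := by
      ext z
      simp only [Set.mem_iUnion, List.mem_cons, Set.mem_union]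
      constructor
      · rintro ⟨q, (rfl | hq), hz⟩
        exacts [Or.inl hz, Or.inr ⟨q, hq, hz⟩]
      · rintro (hz | ⟨q, hq, hz⟩)
        exacts [⟨p, Or.inl rfl, hz⟩, ⟨q, Or.inr hq, hz⟩]
    rw [this]
    exact (h p (List.mem_cons_self)).union
      (ih fun q hq => h q (List.mem_cons_of_mem _ hq))

end Extension

section ExtMain

variable {X : Type*} [TopologicalSpace X] {k : Type*} [Field k]

lemma exists_invariant_extension [LocallyCompactSpace X] [T2Space X]
    [TotallyDisconnectedSpace X]
    (l : ℕ) (hl : 0 < l) (γ : X ≃ₜ X) (hγl : ∀ x, (⇑γ)^[l] x = x)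
    (g : Ccinf {x : X // γ x = x} k) :
    ∃ φ : Ccinf X k, gammaT γ φ = φ ∧ resL γ φ = g := by
  classical
  set F := {x : X // γ x = x}
  set K₀ : Set X := Subtype.val '' tsupport (g : F → k) with hK₀def
  have hK₀ : IsCompact K₀ := (g.2.2 : IsCompact _).image continuous_subtype_val
  have hC : ∀ y, y ∈ K₀ → ∃ V : Set X, ∃ c : k,
      (IsClopen V ∧ IsCompact V ∧ ⇑γ ⁻¹' V = V ∧
        ∀ z : F, z.1 ∈ V → (g : F → k) z = c) ∧ V ∈ nhds y := by
    rintro y hy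
    have hfix : γ y = y := by
      obtain ⟨z, _, rfl⟩ := hy
      exact z.2
    set c : k := (g : F → k) ⟨y, hfix⟩ with hc
    have hopen : IsOpen ((g : F → k) ⁻¹' {c}) := g.2.1 {c}
    obtain ⟨U₀, hU₀open, hU₀pre⟩ := isOpen_induced_iff.1 hopen
    have hyU₀ : y ∈ U₀ := by
      have : (⟨y, hfix⟩ : F) ∈ Subtype.val ⁻¹' U₀ := by
        rw [hU₀pre]; exact rfl
      exact this
    obtain ⟨V₁, hV₁clopen, hV₁comp, hyV₁, hV₁U₀⟩ := exists_compact_clopen_nhd hU₀open hyU₀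
    set V : Set X := ⋂ i ∈ Finset.range l, (⇑γ)^[i] ⁻¹' V₁ with hVdef
    have hVsub : V ⊆ V₁ := fun z hz => by
      have := Set.mem_iInter₂.1 hz 0 (Finset.mem_range.2 hl)
      exact this
    have hVmem : ∀ z, z ∈ V ↔ ∀ i, i < l → (⇑γ)^[i] z ∈ V₁ := by
      intro z
      rw [hVdef]
      simp only [Set.mem_iInter, Finset.mem_range, Set.mem_preimage]
    have hVclopen : IsClopen V := by
      rw [hVdef]
      exact Set.Finite.isClopen_biInter (Finset.range l).finite_toSet
        fun i _ => hV₁clopen.preimage (γ.continuous.iterate i)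
    refine ⟨V, c, ⟨hVclopen, hV₁comp.of_isClosed_subset hVclopen.1 hVsub, ?_, ?_⟩, ?_⟩
    · ext z
      rw [Set.mem_preimage, hVmem, hVmem]
      constructor
      · intro h i hi
        rcases Nat.eq_zero_or_pos i with rfl | hi0
        · have h' := h (l - 1) (by omega)
          rw [← Function.iterate_succ_apply] at h'
          have e : (l - 1).succ = l := by omega
          rw [e, hγl] at h'
          exact h'
        · have h' := h (i - 1) (by omega)
          rw [← Function.iterate_succ_apply] at h'
          have e : (i - 1).succ = i := by omega
          rw [e] at h'
          exact h'
      · intro h i hi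
        rw [← Function.iterate_succ_apply]
        rcases Nat.lt_or_ge (i + 1) l with h1 | h1
        · exact h (i + 1) h1
        · have hil : i.succ = l := by omega
          rw [hil, hγl]
          exact h 0 hl
    · intro z hz
      have hzU : z ∈ (Subtype.val ⁻¹' U₀ : Set F) := hV₁U₀ (hVsub hz)
      rw [hU₀pre] at hzU
      simpa using hzU
    · exact hVclopen.2.mem_nhds ((hVmem y).2 fun i _ => by
        rw [Function.iterate_fixed hfix]; exact hyV₁)
  choose Vf cf hVf hVnh using hC
  obtain ⟨t, ht⟩ := hK₀.elim_nhds_subcover' Vf hVnh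
  set L : List (Set X × k) := t.toList.map (fun a => (Vf a.1 a.2, cf a.1 a.2)) with hLdef
  have hLclopen : ∀ p ∈ L, IsClopen p.1 := by
    intro p hp
    rw [hLdef, List.mem_map] at hp
    obtain ⟨a, _, rfl⟩ := hp
    exact (hVf a.1 a.2).1
  have hLcomp : ∀ p ∈ L, IsCompact p.1 := by
    intro p hp
    rw [hLdef, List.mem_map] at hp
    obtain ⟨a, _, rfl⟩ := hp
    exact (hVf a.1 a.2).2.1
  have hLinv : ∀ p ∈ L, ⇑γ ⁻¹' p.1 = p.1 := by
    intro p hp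
    rw [hLdef, List.mem_map] at hp
    obtain ⟨a, _, rfl⟩ := hp
    exact (hVf a.1 a.2).2.2.1
  have hLval : ∀ p ∈ L, ∀ z : F, z.1 ∈ p.1 → (g : F → k) z = p.2 := by
    intro p hp
    rw [hLdef, List.mem_map] at hp
    obtain ⟨a, _, rfl⟩ := hp
    exact (hVf a.1 a.2).2.2.2
  have hK₀cov : K₀ ⊆ ⋃ p ∈ L, p.1 := by
    intro x hx
    obtain ⟨a, ha, hxa⟩ := Set.mem_iUnion₂.1 (ht hx)
    refine Set.mem_iUnion₂.2 ⟨(Vf a.1 a.2, cf a.1 a.2), ?_, hxa⟩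
    rw [hLdef]
    exact List.mem_map.2 ⟨a, Finset.mem_toList.2 ha, rfl⟩
  have hsupp : Function.support (buildFun L) ⊆ ⋃ p ∈ L, p.1 := buildFun_support L
  have hclosed : IsClosed (⋃ p ∈ L, p.1) :=
    list_biUnion_isClosed L fun p hp => (hLclopen p hp).1
  have hcs : HasCompactSupport (buildFun L) := by
    apply IsCompact.of_isClosed_subset (list_biUnion_isCompact L hLcomp) (isClosed_tsupport _)
    exact closure_minimal hsupp hclosed
  set φ : Ccinf X k := ⟨buildFun L, buildFun_lc L hLclopen, hcs⟩ with hφdef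
  refine ⟨φ, ?_, ?_⟩
  · apply Subtype.ext
    funext x
    exact buildFun_inv γ L hLinv x
  · apply Subtype.ext
    funext z
    show buildFun L z.1 = (g : F → k) z
    by_cases hz : z.1 ∈ ⋃ p ∈ L, p.1
    · set G : X → k := fun x => if h : γ x = x then (g : F → k) ⟨x, h⟩ else 0 with hGdef
      have := buildFun_eq_on L {x : X | γ x = x} G (by
        intro p hp w hw hwS
        simp only [Set.mem_setOf_eq] at hwS
        show (if h : γ w = w then (g : F → k) ⟨w, h⟩ else 0) = p.2
        rw [dif_pos hwS]
        exact hLval p hp ⟨w, hwS⟩ hw) z.1 z.2 hz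
      rw [this]
      show (if h : γ z.1 = z.1 then (g : F → k) ⟨z.1, h⟩ else 0) = (g : F → k) z
      rw [dif_pos z.2]
    · have h1 : buildFun L z.1 = 0 := by
        by_contra h0
        exact hz (hsupp h0)
      have h2 : (g : F → k) z = 0 := by
        by_contra h0
        apply hz
        apply hK₀cov
        rw [hK₀def]
        exact ⟨z, subset_closure (Function.mem_support.2 h0), rfl⟩
      rw [h1, h2]

end ExtMain

set_option maxHeartbeats 1000000 in
set_option synthInstance.maxHeartbeats 1000000 in
/-- Let `γ` be a homeomorphism, of order dividing the prime `l`, of a locally compact,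
Hausdorff, totally disconnected, second countable space `X`, and let `k` be a field of
characteristic `l`. If `I : C_c^∞(X, k) → k` is a `γ`-invariant `k`-linear functional,
then there is a unique `k`-linear functional `J : C_c^∞(X^γ, k) → k` such that
`I(φ) = J(φ|_{X^γ})` for every `γ`-invariant `φ ∈ C_c^∞(X, k)`. -/
theorem invariant_functional_descends
    (l : ℕ) (hl : l.Prime)
    (X : Type*) [TopologicalSpace X] [LocallyCompactSpace X] [T2Space X]
    [TotallyDisconnectedSpace X] [SecondCountableTopology X]
    (γ : X ≃ₜ X) (hγl : ∀ x, (⇑γ)^[l] x = x)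
    (k : Type*) [Field k] [CharP k l]
    (I : Ccinf X k →ₗ[k] k) (hI : ∀ f : Ccinf X k, I (gammaT γ f) = I f) :
    ∃! J : Ccinf {x : X // γ x = x} k →ₗ[k] k,
      ∀ φ : Ccinf X k, gammaT γ φ = φ → I φ = J (resL γ φ) := by
  classical
  set M : Submodule k (Ccinf X k) := LinearMap.ker (gammaT γ - (LinearMap.id : Ccinf X k →ₗ[k] Ccinf X k)) with hM
  have hMmem : ∀ φ : Ccinf X k, φ ∈ M ↔ gammaT γ φ = φ := by
    intro φ
    rw [hM, LinearMap.mem_ker, LinearMap.sub_apply, LinearMap.id_apply, sub_eq_zero]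
  set r : M →ₗ[k] Ccinf {x : X // γ x = x} k := (resL γ).comp M.subtype with hr
  have hsurj : LinearMap.range r = ⊤ := by
    rw [LinearMap.range_eq_top]
    intro g
    obtain ⟨φ, hφ1, hφ2⟩ := exists_invariant_extension l hl.pos γ hγl g
    exact ⟨⟨φ, (hMmem φ).2 hφ1⟩, hφ2⟩
  haveI : Module.Free k ↥(Ccinf {x : X // γ x = x} k) := Module.Free.of_divisionRing k _
  haveI : Module.Projective k ↥(Ccinf {x : X // γ x = x} k) :=
    Module.Projective.of_free
  obtain ⟨s, hs⟩ := r.exists_rightInverse_of_surjective hsurj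
  set J : Ccinf {x : X // γ x = x} k →ₗ[k] k := (I.comp M.subtype).comp s with hJ
  have key : ∀ φ : Ccinf X k, gammaT γ φ = φ → I φ = J (resL γ φ) := by
    intro φ hφ
    set m : M := ⟨φ, (hMmem φ).2 hφ⟩ with hm
    have h1 : r (s (r m)) = r m := by
      rw [← LinearMap.comp_apply, hs, LinearMap.id_apply]
    have hdiff : I (M.subtype (s (r m) - m)) = 0 := by
      apply I_vanishes l hl γ hγl I hI
      · exact (hMmem _).1 (s (r m) - m).2
      · intro z hz
        have h3 : r (s (r m) - m) = 0 := by
          rw [show r (s (r m) - m) = r (s (r m)) - r m by exact map_sub r _ _, h1, sub_self]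
        have h4 : resL γ (M.subtype (s (r m) - m)) = 0 := h3
        exact congrFun (congrArg Subtype.val h4) (⟨z, hz⟩ : {x : X // γ x = x})
    rw [show M.subtype (s (r m) - m) = M.subtype (s (r m)) - M.subtype m by exact map_sub M.subtype _ _,
      show I (M.subtype (s (r m)) - M.subtype m)
        = I (M.subtype (s (r m))) - I (M.subtype m) by exact map_sub I _ _] at hdiff
    have h5 : I (M.subtype (s (r m))) = I φ := by
      have : I (M.subtype m) = I φ := rfl
      rw [this] at hdiff
      exact sub_eq_zero.1 hdiff
    show I φ = I (M.subtype (s (resL γ φ)))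
    rw [← h5]
    rfl
  refine ⟨J, key, ?_⟩
  intro J' hJ'
  apply LinearMap.ext
  intro g
  obtain ⟨φ, hφ1, hφ2⟩ := exists_invariant_extension l hl.pos γ hγl g
  have e1 := hJ' φ hφ1
  have e2 := key φ hφ1
  rw [hφ2] at e1 e2
  rw [← e1, ← e2]
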